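/- In a qubit system, the POVM A = ((2/3)|0⟩⟨0|, (2/3)|φ₊⟩⟨φ₊|, (2/3)|φ₋⟩⟨φ₋|), where |φ_±⟩ = (1/2)|0⟩ ± (√3/2)|1⟩, is a valid POVM (the three operators are positive and sum to the identity) and satisfies the intersubjectivity support condition: for any two distinct elements a, a' of A, range(a) ∩ range(a') = {0}; yet A is not a PVM since (2/3)|0⟩⟨0| is not a projection. -/

import Mathlib

open scoped ComplexOrder
open Matrix

/-- The rank-one operator `|ψ⟩⟨ψ|` for a vector `ψ ∈ ℂ²`. -/
noncomputable def outer (v : Fin 2 → ℂ) : Matrix (Fin 2) (Fin 2) ℂ :=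
  Matrix.vecMulVec v (star v)

noncomputable def ketZero : Fin 2 → ℂ := ![1, 0]
noncomputable def ketPhiPlus : Fin 2 → ℂ := ![1 / 2, (Real.sqrt 3 : ℂ) / 2]
noncomputable def ketPhiMinus : Fin 2 → ℂ := ![1 / 2, -((Real.sqrt 3 : ℂ) / 2)]

/-- The three-outcome qubit POVM `((2/3)|0⟩⟨0|, (2/3)|φ₊⟩⟨φ₊|, (2/3)|φ₋⟩⟨φ₋|)`. -/
noncomputable def A13 : Fin 3 → Matrix (Fin 2) (Fin 2) ℂ :=
  ![(2 / 3 : ℝ) • outer ketZero, (2 / 3 : ℝ) • outer ketPhiPlus,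
    (2 / 3 : ℝ) • outer ketPhiMinus]

lemma outer_mulVec (v x : Fin 2 → ℂ) :
    (outer v).mulVec x = (star v ⬝ᵥ x) • v := by
  funext i
  simp [outer, Matrix.mulVec, Matrix.vecMulVec_apply, dotProduct, Finset.mul_sum,
    mul_comm, mul_left_comm]
  ring

lemma smul_outer_posSemidef (r : ℝ) (hr : 0 ≤ r) (v : Fin 2 → ℂ) :
    (r • outer v).PosSemidef := by
  refine Matrix.PosSemidef.of_dotProduct_mulVec_nonneg ?_ ?_
  · ext i j
    simp [outer, Matrix.conjTranspose_apply, Matrix.vecMulVec_apply, mul_comm,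
      Complex.real_smul]
  · intro x
    rw [Matrix.smul_mulVec, outer_mulVec]
    have h1 : star x ⬝ᵥ ((star v ⬝ᵥ x) • v) = (star v ⬝ᵥ x) * star (star v ⬝ᵥ x) := by
      rw [dotProduct_smul]
      congr 1
      simp [dotProduct, mul_comm]
    rw [dotProduct_smul, h1, Complex.real_smul]
    exact mul_nonneg (by exact_mod_cast Complex.zero_le_real.2 hr)
      (mul_star_self_nonneg _)

lemma mem_range_smul_outer {r : ℝ} {v x : Fin 2 → ℂ}
    (hx : x ∈ LinearMap.range (r • outer v).mulVecLin) : ∃ c : ℂ, x = c • v := by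
  obtain ⟨y, hy⟩ := hx
  refine ⟨(r : ℂ) * (star v ⬝ᵥ y), ?_⟩
  rw [← hy]
  simp only [Matrix.mulVecLin_apply, Matrix.smul_mulVec, outer_mulVec]
  rw [← smul_assoc, Complex.real_smul]

lemma sqrt3_ne_zero : (Real.sqrt 3 : ℂ) ≠ 0 := by
  have : Real.sqrt 3 ≠ 0 := by positivity
  exact_mod_cast this

/-- `A13` is a valid POVM, satisfies the intersubjectivity support condition
(ranges of distinct elements intersect trivially), yet it is not a PVM since its first
element `(2/3)|0⟩⟨0|` is not a projection. -/
theorem qubit_intersubjective_povm_not_pvm :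
    (∀ i, (A13 i).PosSemidef) ∧ (∑ i, A13 i = 1) ∧
      (∀ i j, i ≠ j →
        LinearMap.range (A13 i).mulVecLin ⊓ LinearMap.range (A13 j).mulVecLin = ⊥) ∧
      A13 0 * A13 0 ≠ A13 0 := by
  refine ⟨?_, ?_, ?_, ?_⟩
  · intro i
    fin_cases i <;> exact smul_outer_posSemidef (2/3) (by norm_num) _
  · have hsq : (Real.sqrt 3 : ℂ) ^ 2 = 3 := by
      rw [← Complex.ofReal_pow, Real.sq_sqrt (by norm_num : (0:ℝ) ≤ 3)]
      norm_num
    ext i j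
    fin_cases i <;> fin_cases j <;>
      simp [A13, outer, ketZero, ketPhiPlus, ketPhiMinus, Fin.sum_univ_three,
        Matrix.vecMulVec_apply, Matrix.one_apply, Complex.real_smul, -Matrix.cons_vecMulVec,
        -Matrix.vecMulVec_cons] <;>
      ring_nf <;> rw [hsq] <;> ring
  · intro i j hij
    rw [eq_bot_iff]
    rintro x hx
    rw [Submodule.mem_inf] at hx
    rw [Submodule.mem_bot]
    fin_cases i <;> fin_cases j <;> try exact absurd rfl hij
    all_goals
      obtain ⟨c, hc⟩ := mem_range_smul_outer hx.1
    all_goals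
      obtain ⟨d, hd⟩ := mem_range_smul_outer hx.2
    all_goals
      have h0 := (congrFun hc 0).symm.trans (congrFun hd 0)
    all_goals
      have h1 := (congrFun hc 1).symm.trans (congrFun hd 1)
    all_goals
      simp [ketZero, ketPhiPlus, ketPhiMinus] at h0 h1
    all_goals first
      | (rw [hd, show d = 0 from h1, zero_smul])
      | (rw [hc, show c = 0 from h1, zero_smul])
      | (subst h0
         have hz : c * (Real.sqrt 3 : ℂ) = 0 := by
           first | linear_combination h1 | linear_combination -h1
         have hc0 : c = 0 := (mul_eq_zero.mp hz).resolve_right sqrt3_ne_zero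
         rw [hc, hc0, zero_smul])
  · intro h
    have := congrFun (congrFun h 0) 0
    simp [A13, outer, ketZero, Matrix.mul_apply, Matrix.vecMulVec_apply,
      Fin.sum_univ_two, Complex.real_smul, -Matrix.cons_vecMulVec, -Matrix.vecMulVec_cons] at this
    norm_num at this
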